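/- Let n be an odd integer with n = 5 or n > 19, and let f₀ > 0, β < 0 be real numbers. There exists a constant M > 0, depending only on n, f₀ and β, such that for all η > 0, μ > 0 satisfying −( (n−2)² c̄₂ η β ) / ( 2 f₀ ) ≥ μ c̄₃, and for a₁ > 0, a₃ = ( 2μ / ( (n−1)(n−3) − 3 ) ) a₁, a₅ = ( 3μ / ( (n−1)(n−3) − 15 ) ) a₃, one has: −( (n−2)/(2n) + (n−1)/n ) η β a₃ − 4 f₀ ((n−1)/n) a₅ ≥ M η μ a₁. -/

import Mathlib

open MeasureTheory

section Aux

open Real Set Filter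

private lemma contF_aux (a : ℕ) (b : ℝ) :
    Continuous (fun r : ℝ => r ^ a * (1 + r ^ 2) ^ (-b)) := by
  refine (continuous_pow a).mul (Continuous.rpow_const (by continuity) fun x => Or.inl ?_)
  positivity

private lemma integrable1_aux (a : ℕ) (b : ℝ) (h : (a : ℝ) + 1 < 2 * b) :
    IntegrableOn (fun r : ℝ => r ^ a * (1 + r ^ 2) ^ (-b)) (Ioi 0) := by
  have hb : 0 < b := by
    have := Nat.cast_nonneg (α := ℝ) a; linarith
  rw [← Ioc_union_Ioi_eq_Ioi (zero_le_one (α := ℝ))]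
  refine IntegrableOn.union ((contF_aux a b).integrableOn_Ioc) ?_
  have hint : IntegrableOn (fun r : ℝ => r ^ ((a : ℝ) - 2 * b)) (Ioi 1) :=
    integrableOn_Ioi_rpow_of_lt (by linarith) zero_lt_one
  refine hint.mono' ((contF_aux a b).aestronglyMeasurable.restrict) ?_
  filter_upwards [ae_restrict_mem measurableSet_Ioi] with r (hr : 1 < r)
  have hr0 : 0 < r := by linarith
  have h1 : (1 + r ^ 2) ^ (-b) ≤ (r ^ 2) ^ (-b) := by
    rw [rpow_neg (by positivity), rpow_neg (by positivity)]
    exact inv_anti₀ (by positivity) (rpow_le_rpow (by positivity) (by linarith) hb.le)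
  have h2 : r ^ a * (r ^ 2) ^ (-b) = r ^ ((a : ℝ) - 2 * b) := by
    rw [← rpow_natCast r a, ← rpow_natCast r 2, ← rpow_mul hr0.le, ← rpow_add hr0]
    norm_num; ring_nf
  have hpos : (0:ℝ) ≤ r ^ a * (1 + r ^ 2) ^ (-b) := by positivity
  rw [Real.norm_eq_abs, abs_of_nonneg hpos]
  calc r ^ a * (1 + r ^ 2) ^ (-b) ≤ r ^ a * (r ^ 2) ^ (-b) :=
        mul_le_mul_of_nonneg_left h1 (by positivity)
    _ = _ := h2

private lemma ibp_aux (k : ℕ) (hk : 1 ≤ k) (b : ℝ) (hb : (k : ℝ) + 2 < 2 * b) :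
    2 * (b - 1) * ∫ r in Ioi (0:ℝ), r ^ (k + 1) * (1 + r ^ 2) ^ (-b) =
      (k : ℝ) * ∫ r in Ioi (0:ℝ), r ^ (k - 1) * (1 + r ^ 2) ^ (-(b - 1)) := by
  have hk1 : ((k - 1 : ℕ) : ℝ) = (k : ℝ) - 1 := by
    rw [Nat.cast_sub hk]; norm_num
  have hI1 : IntegrableOn (fun r : ℝ => r ^ (k - 1) * (1 + r ^ 2) ^ (-(b - 1))) (Ioi 0) :=
    integrable1_aux _ _ (by rw [hk1]; linarith)
  have hI2 : IntegrableOn (fun r : ℝ => r ^ (k + 1) * (1 + r ^ 2) ^ (-b)) (Ioi 0) :=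
    integrable1_aux _ _ (by push_cast; linarith)
  set F : ℝ → ℝ := fun r => r ^ k * (1 + r ^ 2) ^ (1 - b) with hF
  set F' : ℝ → ℝ := fun r =>
    (k : ℝ) * (r ^ (k - 1) * (1 + r ^ 2) ^ (-(b - 1)))
      - 2 * (b - 1) * (r ^ (k + 1) * (1 + r ^ 2) ^ (-b)) with hF'
  have hderiv : ∀ x ∈ Ici (0:ℝ), HasDerivAt F (F' x) x := by
    intro x _
    have h1 : HasDerivAt (fun r : ℝ => 1 + r ^ 2) (2 * x) x := by
      simpa using (hasDerivAt_pow 2 x).const_add 1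
    have hne : (1 : ℝ) + x ^ 2 ≠ 0 := by positivity
    have h2 := h1.rpow_const (Or.inl hne) (p := 1 - b)
    have h3 := (hasDerivAt_pow k x).mul h2
    refine h3.congr_deriv ?_; symm
    have e1 : 1 - b - 1 = -b := by ring
    have e2 : -(b - 1) = 1 - b := by ring
    rw [hF', e1, e2]
    show (k:ℝ) * (x ^ (k-1) * (1+x^2) ^ (1-b)) - 2*(b-1) * (x ^ (k+1) * (1+x^2) ^ (-b)) = _
    ring
  have hb1 : (0:ℝ) < b - 1 := by
    have := Nat.cast_nonneg (α := ℝ) k; linarith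
  have htend : Tendsto F atTop (nhds 0) := by
    have hpos : (0:ℝ) < -((k:ℝ) + 2 * (1 - b)) := by linarith
    have h0 : Tendsto (fun r : ℝ => r ^ ((k : ℝ) + 2 * (1 - b))) atTop (nhds 0) := by
      simpa using tendsto_rpow_neg_atTop hpos
    refine squeeze_zero' ?_ ?_ h0
    · filter_upwards [eventually_ge_atTop (1:ℝ)] with r hr
      have : (0:ℝ) < r := by linarith
      positivity
    · filter_upwards [eventually_gt_atTop (1:ℝ)] with r hr
      have hr0 : 0 < r := by linarith
      have h1 : (1 + r ^ 2) ^ (1 - b) ≤ (r ^ 2) ^ (1 - b) :=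
        rpow_le_rpow_of_nonpos (by positivity) (by linarith) (by linarith)
      have h2 : r ^ k * (r ^ 2) ^ (1 - b) = r ^ ((k : ℝ) + 2 * (1 - b)) := by
        rw [← rpow_natCast r k, ← rpow_natCast r 2, ← rpow_mul hr0.le, ← rpow_add hr0]
        norm_num
      calc F r ≤ r ^ k * (r ^ 2) ^ (1 - b) :=
            mul_le_mul_of_nonneg_left h1 (by positivity)
        _ = _ := h2
  have hF0 : F 0 = 0 := by
    simp [hF, zero_pow (by omega : k ≠ 0)]
  have hint : ∫ r in Ioi (0:ℝ), F' r = 0 - F 0 := by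
    refine integral_Ioi_of_hasDerivAt_of_tendsto' hderiv ?_ htend
    exact (hI1.const_mul _).sub (hI2.const_mul _)
  rw [hF0, sub_zero] at hint
  simp only [hF'] at hint
  rw [integral_sub (hI1.const_mul ((k:ℝ))) (hI2.const_mul (2*(b-1))),
    integral_const_mul, integral_const_mul, sub_eq_zero] at hint
  linarith [hint]

private lemma split_aux (k : ℕ) (hk : 1 ≤ k) (b : ℝ) (hb : (k : ℝ) + 2 < 2 * b) :
    ∫ r in Ioi (0:ℝ), r ^ (k + 1) * (1 + r ^ 2) ^ (-b) =
      (∫ r in Ioi (0:ℝ), r ^ (k - 1) * (1 + r ^ 2) ^ (-(b - 1))) -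
        ∫ r in Ioi (0:ℝ), r ^ (k - 1) * (1 + r ^ 2) ^ (-b) := by
  have hk1 : ((k - 1 : ℕ) : ℝ) = (k : ℝ) - 1 := by
    rw [Nat.cast_sub hk]; norm_num
  have hI1 : IntegrableOn (fun r : ℝ => r ^ (k - 1) * (1 + r ^ 2) ^ (-(b - 1))) (Ioi 0) :=
    integrable1_aux _ _ (by rw [hk1]; linarith)
  have hI2 : IntegrableOn (fun r : ℝ => r ^ (k - 1) * (1 + r ^ 2) ^ (-b)) (Ioi 0) :=
    integrable1_aux _ _ (by rw [hk1]; linarith)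
  rw [← integral_sub hI1 hI2]
  refine setIntegral_congr_fun measurableSet_Ioi fun r hr => ?_
  have hr0 : (0:ℝ) < r := hr
  have h1 : (1 + r ^ 2) ^ (-(b - 1)) = (1 + r ^ 2) ^ (-b) * (1 + r ^ 2) := by
    rw [show -(b-1) = -b + 1 by ring, rpow_add (by positivity), rpow_one]
  have h2 : r ^ (k + 1) = r ^ (k - 1) * r ^ 2 := by
    rw [← pow_add]; congr 1; omega
  rw [h1, h2]; ring

private lemma polar_aux (n : ℕ) (hn : 5 ≤ n) (f : ℝ → ℝ) :
    ∫ x : EuclideanSpace ℝ (Fin n), f ‖x‖ =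
      ((n : ℝ) * (volume (Metric.ball (0 : EuclideanSpace ℝ (Fin n)) 1)).toReal) *
        ∫ y in Ioi (0:ℝ), y ^ (n - 1) * f y := by
  haveI : Nonempty (Fin n) := ⟨⟨0, by omega⟩⟩
  rw [MeasureTheory.integral_fun_norm_addHaar volume f]
  simp only [finrank_euclideanSpace_fin, nsmul_eq_mul, smul_eq_mul, integral_const_mul, measureReal_def]
  ring

private lemma c_ratio_aux (n : ℕ) (hn : 21 ≤ n) :
    (∫ x : EuclideanSpace ℝ (Fin n), ‖x‖ ^ 2 * (1 + ‖x‖ ^ 2) ^ (-(n : ℝ))) *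
        (4 * ((n : ℝ) - 1) * ((n : ℝ) - 2)) =
      ((n : ℝ) * ((n : ℝ) - 4)) *
        ∫ x : EuclideanSpace ℝ (Fin n), (1 + ‖x‖ ^ 2) ^ (-((n : ℝ) - 2)) := by
  have hn5 : 5 ≤ n := by omega
  have hN : (21 : ℝ) ≤ (n : ℝ) := by exact_mod_cast hn
  rw [polar_aux n hn5 (fun y => y ^ 2 * (1 + y ^ 2) ^ (-(n : ℝ))),
    polar_aux n hn5 (fun y => (1 + y ^ 2) ^ (-((n : ℝ) - 2)))]
  set C := ((n : ℝ) * (volume (Metric.ball (0 : EuclideanSpace ℝ (Fin n)) 1)).toReal)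
  have hcong : (∫ y in Ioi (0:ℝ), y ^ (n - 1) * (y ^ 2 * (1 + y ^ 2) ^ (-(n : ℝ)))) =
      ∫ y in Ioi (0:ℝ), y ^ (n + 1) * (1 + y ^ 2) ^ (-(n : ℝ)) := by
    refine integral_congr_ae (Eventually.of_forall fun y => ?_)
    show y ^ (n - 1) * (y ^ 2 * (1 + y ^ 2) ^ (-(n:ℝ))) = y ^ (n + 1) * (1 + y ^ 2) ^ (-(n:ℝ))
    rw [← mul_assoc, ← pow_add, show n - 1 + 2 = n + 1 by omega]
  rw [hcong]
  have h1 := ibp_aux n (by omega) (n : ℝ) (by linarith)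
  have h2 := ibp_aux n (by omega) ((n : ℝ) - 1) (by linarith)
  have h3 := split_aux n (by omega) ((n : ℝ) - 1) (by linarith)
  rw [show -((n:ℝ) - 1 - 1) = -((n:ℝ) - 2) by ring] at h2 h3
  set J1 := ∫ r in Ioi (0:ℝ), r ^ (n + 1) * (1 + r ^ 2) ^ (-(n : ℝ))
  set J2 := ∫ r in Ioi (0:ℝ), r ^ (n + 1) * (1 + r ^ 2) ^ (-((n : ℝ) - 1))
  set I1 := ∫ r in Ioi (0:ℝ), r ^ (n - 1) * (1 + r ^ 2) ^ (-((n : ℝ) - 1))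
  set I2 := ∫ r in Ioi (0:ℝ), r ^ (n - 1) * (1 + r ^ 2) ^ (-((n : ℝ) - 2))
  linear_combination (2 * ((n:ℝ) - 2) * C) * h1 - ((n:ℝ) * C) * h2 +
    (2 * (n:ℝ) * ((n:ℝ) - 2) * C) * h3

private lemma c3_pos_aux (n : ℕ) (hn : 21 ≤ n) :
    0 < ∫ x : EuclideanSpace ℝ (Fin n), (1 + ‖x‖ ^ 2) ^ (-((n : ℝ) - 2)) := by
  haveI : Nonempty (Fin n) := ⟨⟨0, by omega⟩⟩
  have hint : Integrable (fun x : EuclideanSpace ℝ (Fin n) =>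
      (1 + ‖x‖ ^ 2) ^ (-((n : ℝ) - 2))) := by
    have h := integrable_rpow_neg_one_add_norm_sq
      (E := EuclideanSpace ℝ (Fin n)) (μ := volume) (r := 2 * ((n : ℝ) - 2)) ?_
    · refine h.congr (Eventually.of_forall fun x => ?_)
      congr 1; ring
    · rw [finrank_euclideanSpace_fin]
      have : (21 : ℝ) ≤ (n : ℝ) := by exact_mod_cast hn
      linarith
  rw [integral_pos_iff_support_of_nonneg_ae (Eventually.of_forall fun x => by positivity) hint]
  have hsupp : Function.support (fun x : EuclideanSpace ℝ (Fin n) =>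
      (1 + ‖x‖ ^ 2) ^ (-((n : ℝ) - 2))) = Set.univ := by
    ext x; simp only [Function.mem_support, Set.mem_univ, iff_true]
    positivity
  rw [hsupp]
  exact MeasureTheory.Measure.measure_univ_pos.mpr (NeZero.ne _)

private lemma final_alg_aux (N η μ a₁ β f₀ : ℝ) (hN : 21 ≤ N) (hμ : 0 < μ)
    (ha₁ : 0 < a₁) (hf₀ : 0 < f₀)
    (hkey : μ * (2 * f₀) * (4 * (N - 1) * (N - 2)) ≤ (N - 2) ^ 2 * (N * (N - 4)) * η * (-β)) :
    -((N - 2) / (2 * N) + (N - 1) / N) * η * β * (2 * μ / ((N - 1) * (N - 3) - 3) * a₁) -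
        4 * f₀ * ((N - 1) / N) *
          (3 * μ / ((N - 1) * (N - 3) - 15) * (2 * μ / ((N - 1) * (N - 3) - 3) * a₁)) ≥
      (-β / ((N - 1) * (N - 3) - 3) *
          ((3 * N - 4) / N - 3 * (N - 2) * (N - 4) / ((N - 1) * (N - 3) - 15))) * η * μ * a₁ := by
  have hD3 : (0:ℝ) < (N - 1) * (N - 3) - 3 := by nlinarith
  have hD5 : (0:ℝ) < (N - 1) * (N - 3) - 15 := by nlinarith
  have hN0 : (0:ℝ) < N := by linarith
  have h3 : μ * (2 * f₀) * (4 * (N - 1)) ≤ (N - 2) * (N * (N - 4)) * η * (-β) := by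
    rw [← mul_le_mul_iff_of_pos_right (show (0:ℝ) < N - 2 by linarith)]
    nlinarith [hkey]
  rw [ge_iff_le, ← sub_nonneg]
  have hexpr :
      -((N - 2) / (2 * N) + (N - 1) / N) * η * β * (2 * μ / ((N - 1) * (N - 3) - 3) * a₁) -
          4 * f₀ * ((N - 1) / N) *
            (3 * μ / ((N - 1) * (N - 3) - 15) * (2 * μ / ((N - 1) * (N - 3) - 3) * a₁)) -
        (-β / ((N - 1) * (N - 3) - 3) *
            ((3 * N - 4) / N - 3 * (N - 2) * (N - 4) / ((N - 1) * (N - 3) - 15))) * η * μ * a₁ =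
      μ * a₁ / (N * ((N - 1) * (N - 3) - 3) * ((N - 1) * (N - 3) - 15)) *
        (3 * N * (N - 2) * (N - 4) * η * (-β) - 24 * f₀ * (N - 1) * μ) := by
    field_simp
    ring
  rw [hexpr]
  apply mul_nonneg (by positivity)
  nlinarith [h3]

end Aux

/-- Let `n` be odd with `n = 5` or `n > 19`, `f₀ > 0`, `β < 0`. There exists
`M > 0` (depending only on `n`, `f₀`, `β`) such that for all `η > 0`, `μ > 0` with
`−((n−2)² c̄₂ η β)/(2f₀) ≥ μ c̄₃`, and `a₁ > 0`, `a₃ = (2μ/((n−1)(n−3)−3)) a₁`,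
`a₅ = (3μ/((n−1)(n−3)−15)) a₃`, one has
`−((n−2)/(2n) + (n−1)/n) η β a₃ − 4f₀((n−1)/n) a₅ ≥ M η μ a₁`. -/
theorem stmt_15 (n : ℕ) (hodd : Odd n) (hn : n = 5 ∨ 19 < n) (f₀ β : ℝ)
    (hf₀ : 0 < f₀) (hβ : β < 0) :
    ∃ M : ℝ, 0 < M ∧
      ∀ η μ a₁ a₃ a₅ : ℝ, 0 < η → 0 < μ →
        -(((n : ℝ) - 2) ^ 2 *
              (∫ x : EuclideanSpace ℝ (Fin n), ‖x‖ ^ 2 * (1 + ‖x‖ ^ 2) ^ (-(n : ℝ))) * η * β) /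
            (2 * f₀) ≥
          μ * (∫ x : EuclideanSpace ℝ (Fin n), (1 + ‖x‖ ^ 2) ^ (-((n : ℝ) - 2))) →
        0 < a₁ →
        a₃ = 2 * μ / (((n : ℝ) - 1) * ((n : ℝ) - 3) - 3) * a₁ →
        a₅ = 3 * μ / (((n : ℝ) - 1) * ((n : ℝ) - 3) - 15) * a₃ →
        -(((n : ℝ) - 2) / (2 * (n : ℝ)) + ((n : ℝ) - 1) / (n : ℝ)) * η * β * a₃ -
            4 * f₀ * (((n : ℝ) - 1) / (n : ℝ)) * a₅ ≥ M * η * μ * a₁ := by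
  rcases hn with h5 | h20
  · -- n = 5
    subst h5
    refine ⟨11 * (-β) / 25, by linarith, ?_⟩
    intro η μ a₁ a₃ a₅ hη hμ _ ha₁ ha₃ ha₅
    subst ha₃ ha₅
    norm_num
    nlinarith [mul_pos hf₀ (mul_pos (mul_pos hμ hμ) ha₁),
      mul_pos (mul_pos hη hμ) ha₁, mul_pos (mul_pos (mul_pos hη hμ) ha₁) (neg_pos.2 hβ)]
  · -- n ≥ 21
    have hn21 : 21 ≤ n := by
      obtain ⟨k, hk⟩ := hodd; omega
    set N : ℝ := (n : ℝ) with hNdef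
    have hN : (21 : ℝ) ≤ N := by rw [hNdef]; exact_mod_cast hn21
    have hD3 : (0:ℝ) < (N - 1) * (N - 3) - 3 := by nlinarith
    have hD5 : (0:ℝ) < (N - 1) * (N - 3) - 15 := by nlinarith
    have hN0 : (0:ℝ) < N := by linarith
    refine ⟨-β / ((N - 1) * (N - 3) - 3) *
        ((3 * N - 4) / N - 3 * (N - 2) * (N - 4) / ((N - 1) * (N - 3) - 15)), ?_, ?_⟩
    · apply mul_pos (div_pos (neg_pos.2 hβ) hD3)
      rw [sub_pos, div_lt_div_iff₀ hD5 hN0]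
      nlinarith [sq_nonneg (N - 21)]
    · intro η μ a₁ a₃ a₅ hη hμ hyp ha₁ ha₃ ha₅
      subst ha₃ ha₅
      set c₂ := ∫ x : EuclideanSpace ℝ (Fin n), ‖x‖ ^ 2 * (1 + ‖x‖ ^ 2) ^ (-(n : ℝ)) with hc₂
      set c₃ := ∫ x : EuclideanSpace ℝ (Fin n), (1 + ‖x‖ ^ 2) ^ (-((n : ℝ) - 2)) with hc₃
      have hc3 : 0 < c₃ := c3_pos_aux n hn21
      have hratio : c₂ * (4 * (N - 1) * (N - 2)) = (N * (N - 4)) * c₃ := c_ratio_aux n hn21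
      rw [ge_iff_le, le_div_iff₀ (by positivity : (0:ℝ) < 2 * f₀)] at hyp
      have hkey : μ * (2 * f₀) * (4 * (N - 1) * (N - 2)) ≤
          (N - 2) ^ 2 * (N * (N - 4)) * η * (-β) := by
        rw [← mul_le_mul_iff_of_pos_right hc3]
        have hA : μ * c₃ * (2 * f₀) * (4 * (N - 1) * (N - 2)) ≤
            -((N - 2) ^ 2 * c₂ * η * β) * (4 * (N - 1) * (N - 2)) :=
          mul_le_mul_of_nonneg_right hyp (by nlinarith)
        have hB : -((N - 2) ^ 2 * c₂ * η * β) * (4 * (N - 1) * (N - 2)) =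
            (N - 2) ^ 2 * η * (-β) * ((N * (N - 4)) * c₃) := by
          rw [← hratio]; ring
        nlinarith [hA, hB]
      exact final_alg_aux N η μ a₁ β f₀ hN hμ ha₁ hf₀ hkey
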